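/- The set of abundancy indices {σ(n)/n : n ∈ ℕ, n ≥ 1} is dense in the rationals greater than 1; i.e., for any rationals 1 < a < b there exists n with a < σ(n)/n < b. -/

import Mathlib

open Finset ArithmeticFunction

private lemma primesBelow_mono_aux {m n : ℕ} (h : m ≤ n) :
    m.primesBelow ⊆ n.primesBelow := by
  intro p hp
  rw [Nat.mem_primesBelow] at hp ⊢
  exact ⟨lt_of_lt_of_le hp.1 h, hp.2⟩

private lemma aux_one_add_sum_le_prod (s : Finset ℕ) (f : ℕ → ℚ) (hf : ∀ p ∈ s, 0 ≤ f p) :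
    1 + ∑ p ∈ s, f p ≤ ∏ p ∈ s, (1 + f p) := by
  classical
  induction s using Finset.induction_on with
  | empty => simp
  | @insert x s hx ih =>
    have hx0 : 0 ≤ f x := hf x (mem_insert_self _ _)
    have hs0 : ∀ p ∈ s, 0 ≤ f p := fun p hp => hf p (mem_insert_of_mem hp)
    have hsum : 0 ≤ ∑ p ∈ s, f p := Finset.sum_nonneg hs0
    have ih' := ih hs0
    rw [Finset.sum_insert hx, Finset.prod_insert hx]
    nlinarith [ih hs0]

theorem abundancy_dense (a b : ℚ) (ha : 1 < a) (hab : a < b) :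
    ∃ n : ℕ, 0 < n ∧ a < (ArithmeticFunction.sigma 1 n : ℚ) / n ∧ (ArithmeticFunction.sigma 1 n : ℚ) / n < b := by
  classical
  have ha0 : (0:ℚ) < a := by linarith
  obtain ⟨P, hP⟩ := exists_nat_gt (a / (b - a))
  set S : ℕ → Finset ℕ := fun X => (X+1).primesBelow \ (P+1).primesBelow with hS
  set F : ℕ → ℚ := fun X => ∏ p ∈ S X, (1 + 1/(p:ℚ)) with hFdef
  -- bound on the factors
  have hfac : ∀ p : ℕ, P < p → (1 + 1/(p:ℚ)) < b/a := by
    intro p hp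
    have hpQ : (a / (b - a)) < (p:ℚ) := lt_of_lt_of_le hP (by exact_mod_cast hp.le)
    have hp0 : (0:ℚ) < p := by exact_mod_cast Nat.pos_of_ne_zero (by omega)
    have hba : (0:ℚ) < b - a := by linarith
    rw [div_lt_iff₀ hba] at hpQ
    rw [lt_div_iff₀ ha0]
    have : 1/(p:ℚ) < (b-a)/a := by
      rw [div_lt_div_iff₀ hp0 ha0]; linarith
    calc (1 + 1/(p:ℚ)) * a = a + (1/(p:ℚ)) * a := by ring
      _ < a + ((b-a)/a) * a := by
          have := mul_lt_mul_of_pos_right this ha0; linarith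
      _ = b := by field_simp; ring
  have hfacpos : ∀ X : ℕ, ∀ p ∈ S X, (0:ℚ) < 1 + 1/(p:ℚ) := by
    intro X p _
    have : (0:ℚ) ≤ 1/(p:ℚ) := by positivity
    linarith
  have hFpos : ∀ X, 0 < F X := fun X => Finset.prod_pos (hfacpos X)
  -- step lemma
  have hstep : ∀ X : ℕ, F (X+1) = F X ∨
      (P < X + 1 ∧ F (X+1) = (1 + 1/(((X:ℚ))+1)) * F X) := by
    intro X
    by_cases hp : (X+1).Prime
    · by_cases hPX : P < X + 1
      · right
        refine ⟨hPX, ?_⟩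
        have hset : S (X+1) = insert (X+1) (S X) := by
          show (X+1+1).primesBelow \ _ = _
          rw [show X+1+1 = (X+1).succ from rfl, Nat.primesBelow_succ, if_pos hp,
            Finset.insert_sdiff_of_notMem]
          intro h
          exact absurd (Nat.lt_of_mem_primesBelow h) (by omega)
        have hnm : X + 1 ∉ S X := by
          intro h
          exact Nat.notMem_primesBelow _ (Finset.mem_sdiff.mp h).1
        rw [hFdef]
        simp only
        rw [hset, Finset.prod_insert hnm]
        push_cast
        ring
      · left
        have hset : S (X+1) = S X := by
          show (X+1+1).primesBelow \ _ = _
          rw [show X+1+1 = (X+1).succ from rfl, Nat.primesBelow_succ, if_pos hp,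
            Finset.insert_sdiff_of_mem]
          exact Nat.mem_primesBelow.mpr ⟨by omega, hp⟩
        rw [hFdef]; simp only [hset]
    · left
      have hset : S (X+1) = S X := by
        show (X+1+1).primesBelow \ _ = _
        rw [show X+1+1 = (X+1).succ from rfl, Nat.primesBelow_succ, if_neg hp]
      rw [hFdef]; simp only [hset]
  -- unboundedness
  have hgrow : ∀ n : ℕ, ∃ X, P ≤ X ∧ ((3:ℚ)/2)^n ≤ F X := by
    intro n
    induction n with
    | zero =>
      refine ⟨P, le_refl _, ?_⟩
      have : S P = ∅ := Finset.sdiff_self _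
      simp [hFdef, this]
    | succ n ih =>
      obtain ⟨X, hPX, hX⟩ := ih
      have hR := one_half_le_sum_primes_ge_one_div (X+1)
      set X' : ℕ := 4 ^ ((X+1).primesBelow.card + 1) with hX'
      set Y : ℕ := max X X' with hY
      have hXY : X ≤ Y := le_max_left _ _
      have hX'Y : X' ≤ Y := le_max_right _ _
      refine ⟨Y, le_trans hPX hXY, ?_⟩
      -- the new primes
      set T : Finset ℕ := (Y+1).primesBelow \ (X+1).primesBelow with hT
      have hsub : S X ⊆ S Y :=
        Finset.sdiff_subset_sdiff (primesBelow_mono_aux (by omega)) le_rfl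
      have hTd : S Y \ S X = T := by
        ext p
        by_cases hp : p.Prime <;>
          simp [hS, hT, Nat.mem_primesBelow, hp] <;> omega
      have hsplit : F Y = (∏ p ∈ T, (1 + 1/(p:ℚ))) * F X := by
        rw [hFdef]
        simp only
        rw [← Finset.prod_sdiff hsub, hTd]
      -- sum over T is at least 1/2
      have hhalf : (1/2 : ℚ) ≤ ∑ p ∈ T, 1/(p:ℚ) := by
        have hsubT : (X'.succ).primesBelow \ (X+1).primesBelow ⊆ T := by
          apply Finset.sdiff_subset_sdiff _ le_rfl
          exact primesBelow_mono_aux (by omega)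
        have hmono : ∑ p ∈ (X'.succ).primesBelow \ (X+1).primesBelow, (1/(p:ℚ))
            ≤ ∑ p ∈ T, 1/(p:ℚ) := by
          apply Finset.sum_le_sum_of_subset_of_nonneg hsubT
          intro p _ _; positivity
        refine le_trans ?_ hmono
        rw [← Rat.cast_le (K := ℝ)]
        push_cast
        exact_mod_cast hR
      have hprodT : (3/2 : ℚ) ≤ ∏ p ∈ T, (1 + 1/(p:ℚ)) := by
        have := aux_one_add_sum_le_prod T (fun p => 1/(p:ℚ)) (fun p _ => by positivity)
        calc (3/2 : ℚ) = 1 + 1/2 := by norm_num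
          _ ≤ 1 + ∑ p ∈ T, 1/(p:ℚ) := by linarith
          _ ≤ _ := this
      calc ((3:ℚ)/2)^(n+1) = (3/2) * (3/2)^n := by ring
        _ ≤ (∏ p ∈ T, (1 + 1/(p:ℚ))) * F X := by
            apply mul_le_mul hprodT hX (by positivity)
            linarith [hprodT]
        _ = F Y := hsplit.symm
  have hex : ∃ X, a < F X := by
    obtain ⟨n, hn⟩ := pow_unbounded_of_one_lt a (by norm_num : (1:ℚ) < 3/2)
    obtain ⟨X, _, hX⟩ := hgrow n
    exact ⟨X, lt_of_lt_of_le hn hX⟩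
  -- minimal such X
  set X0 := Nat.find hex with hX0def
  have hX0 : a < F X0 := Nat.find_spec hex
  have hX0ne : X0 ≠ 0 := by
    intro h
    have h1 : (1:ℕ).primesBelow = ∅ := by decide
    have : F 0 = 1 := by
      rw [hFdef]; simp [hS, h1]
    rw [h, this] at hX0; linarith
  obtain ⟨Y, hYX0⟩ := Nat.exists_eq_succ_of_ne_zero hX0ne
  have hYX0' : X0 = Y + 1 := hYX0
  have hFY : F Y ≤ a := by
    have h := Nat.find_min hex (m := Y) (by rw [← hX0def]; omega)
    exact not_lt.mp h
  have hFX0b : F X0 < b := by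
    rcases hstep Y with h | ⟨hPY, h⟩
    · rw [hYX0', h] at hX0; linarith
    · rw [hYX0', h]
      have hf := hfac (Y+1) hPY
      push_cast at hf
      have hfp : (0:ℚ) < 1 + 1/((Y:ℚ)+1) := by positivity
      calc (1 + 1/((Y:ℚ)+1)) * F Y ≤ (1 + 1/((Y:ℚ)+1)) * a := by
            exact mul_le_mul_of_nonneg_left hFY (le_of_lt hfp)
        _ < (b/a) * a := mul_lt_mul_of_pos_right hf ha0
        _ = b := by field_simp
  -- now build n
  refine ⟨∏ p ∈ S X0, p, ?_, ?_, ?_⟩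
  · apply Finset.prod_pos
    intro p hp
    exact (Nat.prime_of_mem_primesBelow (Finset.mem_sdiff.mp hp).1).pos
  all_goals {
    have hprime : ∀ p ∈ S X0, p.Prime := fun p hp =>
      Nat.prime_of_mem_primesBelow (Finset.mem_sdiff.mp hp).1
    have hsig : ArithmeticFunction.sigma 1 (∏ p ∈ S X0, p) = ∏ p ∈ S X0, (1 + p) := by
      rw [ArithmeticFunction.IsMultiplicative.map_prod_of_prime
        ArithmeticFunction.isMultiplicative_sigma (S X0) hprime]
      apply Finset.prod_congr rfl
      intro p hp
      have := ArithmeticFunction.sigma_one_apply_prime_pow (p := p) (i := 1) (hprime p hp)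
      simpa [Finset.sum_range_succ] using this
    have hker : ((ArithmeticFunction.sigma 1 (∏ p ∈ S X0, p) : ℕ) : ℚ) / ((∏ p ∈ S X0, p : ℕ) : ℚ)
        = F X0 := by
      rw [hsig]
      push_cast
      rw [← Finset.prod_div_distrib]
      apply Finset.prod_congr rfl
      intro p hp
      have hp0 : ((p:ℚ)) ≠ 0 := Nat.cast_ne_zero.mpr (hprime p hp).pos.ne'
      field_simp
      ring
    rw [hker]
    first | exact hX0 | exact hFX0b
  }
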